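/- For every g ≥ 1 and every Göpel group G ⊆ 𝔽₂^{2g}, there is exactly one coset M = a + G of G in 𝔽₂^{2g} all of whose elements are even theta characteristics. -/

import Mathlib

open BigOperators

/-- Theta characteristics in genus `g`: pairs `(a, b)` with `a, b ∈ 𝔽₂^g`. -/
abbrev TChar (g : ℕ) := (Fin g → ZMod 2) × (Fin g → ZMod 2)

/-- A theta characteristic `(a, b)` is even if `Σᵢ aᵢbᵢ = 0` in `𝔽₂`. -/
def IsEvenChar {g : ℕ} (m : TChar g) : Prop := ∑ i, m.1 i * m.2 i = 0

/-- The standard symplectic pairing `⟨m,n⟩ = aᵀβ + bᵀα` on `𝔽₂^{2g}`. -/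
def symplecticPairing {g : ℕ} (m n : TChar g) : ZMod 2 :=
  ∑ i, (m.1 i * n.2 i + m.2 i * n.1 i)

/-- A subspace is totally isotropic if the symplectic pairing vanishes on it. -/
def IsIsotropic {g : ℕ} (G : Submodule (ZMod 2) (TChar g)) : Prop :=
  ∀ m ∈ G, ∀ n ∈ G, symplecticPairing m n = 0

/-- A Göpel group is a maximal totally isotropic subspace of `𝔽₂^{2g}`. -/
def IsGopel {g : ℕ} (G : Submodule (ZMod 2) (TChar g)) : Prop :=
  IsIsotropic G ∧ ∀ G' : Submodule (ZMod 2) (TChar g), IsIsotropic G' → G ≤ G' → G' = G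

namespace GopelAux

variable {g : ℕ}

def Q {g : ℕ} (m : TChar g) : ZMod 2 := ∑ i, m.1 i * m.2 i

lemma z2_add_self : ∀ a : ZMod 2, a + a = 0 := by decide

lemma z2_cases : ∀ a : ZMod 2, a = 0 ∨ a = 1 := by decide

lemma z2_add_eq_zero {a b : ZMod 2} : a + b = 0 ↔ a = b := by revert a b; decide

lemma Q_add (m n : TChar g) : Q (m + n) = Q m + Q n + symplecticPairing m n := by
  unfold Q symplecticPairing
  rw [← Finset.sum_add_distrib, ← Finset.sum_add_distrib]
  refine Finset.sum_congr rfl fun i _ => ?_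
  simp only [Prod.fst_add, Prod.snd_add, Pi.add_apply]
  ring

lemma Q_zero : Q (0 : TChar g) = 0 := by simp [Q]

lemma sp_comm (m n : TChar g) : symplecticPairing m n = symplecticPairing n m := by
  unfold symplecticPairing
  refine Finset.sum_congr rfl fun i _ => ?_
  ring

lemma sp_self (m : TChar g) : symplecticPairing m m = 0 := by
  unfold symplecticPairing
  refine Finset.sum_eq_zero fun i _ => ?_
  rw [mul_comm]
  exact z2_add_self _

lemma sp_add_left (m m' n : TChar g) :
    symplecticPairing (m + m') n = symplecticPairing m n + symplecticPairing m' n := by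
  unfold symplecticPairing
  rw [← Finset.sum_add_distrib]
  refine Finset.sum_congr rfl fun i _ => ?_
  simp only [Prod.fst_add, Prod.snd_add, Pi.add_apply]
  ring

lemma sp_smul_left (c : ZMod 2) (m n : TChar g) :
    symplecticPairing (c • m) n = c * symplecticPairing m n := by
  unfold symplecticPairing
  rw [Finset.mul_sum]
  refine Finset.sum_congr rfl fun i _ => ?_
  simp only [Prod.smul_fst, Prod.smul_snd, Pi.smul_apply, smul_eq_mul]
  ring

lemma sp_add_right (m n n' : TChar g) :
    symplecticPairing m (n + n') = symplecticPairing m n + symplecticPairing m n' := by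
  rw [sp_comm, sp_add_left, sp_comm n m, sp_comm n' m]

lemma sp_smul_right (c : ZMod 2) (m n : TChar g) :
    symplecticPairing m (c • n) = c * symplecticPairing m n := by
  rw [sp_comm, sp_smul_left, sp_comm]

/-- The pairing as a bilinear form. -/
def B (g : ℕ) : LinearMap.BilinForm (ZMod 2) (TChar g) :=
  LinearMap.mk₂ (ZMod 2) symplecticPairing sp_add_left sp_smul_left sp_add_right sp_smul_right

@[simp] lemma B_apply (m n : TChar g) : B g m n = symplecticPairing m n := rfl

lemma B_nondeg : (B g).Nondegenerate := by
  suffices hL : LinearMap.SeparatingLeft (B g) from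
    ⟨hL, fun m hm => hL m fun y => by rw [B_apply, sp_comm, ← B_apply]; exact hm y⟩
  intro m hm
  have h1 : ∀ j, m.1 j = 0 := by
    intro j
    have := hm (0, Pi.single j 1)
    simpa [symplecticPairing, Pi.single_apply, mul_ite, Finset.sum_ite_eq'] using this
  have h2 : ∀ j, m.2 j = 0 := by
    intro j
    have := hm (Pi.single j 1, 0)
    simpa [symplecticPairing, Pi.single_apply, mul_ite, Finset.sum_ite_eq'] using this
  exact Prod.ext (funext h1) (funext h2)

lemma mem_of_orth {G : Submodule (ZMod 2) (TChar g)} (hG : IsGopel G) (v : TChar g)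
    (hv : ∀ x ∈ G, symplecticPairing v x = 0) : v ∈ G := by
  have hGle : G ≤ G ⊔ Submodule.span (ZMod 2) {v} := le_sup_left
  have hiso : IsIsotropic (G ⊔ Submodule.span (ZMod 2) {v}) := by
    intro m hm n hn
    rw [Submodule.mem_sup] at hm hn
    obtain ⟨x, hx, y, hy, rfl⟩ := hm
    obtain ⟨x', hx', y', hy', rfl⟩ := hn
    rw [Submodule.mem_span_singleton] at hy hy'
    obtain ⟨c, rfl⟩ := hy
    obtain ⟨c', rfl⟩ := hy'
    rw [sp_add_left, sp_add_right, sp_add_right, sp_smul_left, sp_smul_left, sp_smul_right,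
      sp_smul_right]
    rw [hG.1 x hx x' hx', sp_comm x v, hv x hx, hv x' hx', sp_self]
    ring
  have := hG.2 _ hiso hGle
  have hvmem : v ∈ G ⊔ Submodule.span (ZMod 2) {v} :=
    Submodule.mem_sup_right (Submodule.mem_span_singleton_self v)
  rwa [this] at hvmem

def chi (c : ZMod 2) : ℤ := if c = 0 then 1 else -1

lemma chi_add : ∀ c d : ZMod 2, chi (c + d) = chi c * chi d := by decide

lemma chi_zero : chi 0 = 1 := rfl
lemma chi_one : chi 1 = -1 := rfl

lemma chi_sum {ι : Type*} (s : Finset ι) (f : ι → ZMod 2) :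
    chi (∑ i ∈ s, f i) = ∏ i ∈ s, chi (f i) := by
  induction s using Finset.cons_induction with
  | empty => simp [chi]
  | cons a s ha ih => rw [Finset.sum_cons, Finset.prod_cons, chi_add, ih]

lemma total_sum (g : ℕ) : ∑ v : TChar g, chi (Q v) = 2 ^ g := by
  rw [← Equiv.sum_comp (Equiv.arrowProdEquivProdArrow (Fin g) (fun _ => ZMod 2) (fun _ => ZMod 2))
    (fun v => chi (Q v))]
  have h1 : ∀ f : Fin g → ZMod 2 × ZMod 2,
      chi (Q (Equiv.arrowProdEquivProdArrow (Fin g) (fun _ => ZMod 2) (fun _ => ZMod 2) f)) =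
      ∏ i, chi ((f i).1 * (f i).2) := by
    intro f
    rw [show Q (Equiv.arrowProdEquivProdArrow (Fin g) (fun _ => ZMod 2) (fun _ => ZMod 2) f) =
      ∑ i, (f i).1 * (f i).2 from rfl, chi_sum]
  rw [Finset.sum_congr rfl fun f _ => h1 f, ← Fintype.piFinset_univ,
    Finset.sum_prod_piFinset (Finset.univ : Finset (ZMod 2 × ZMod 2))
      (fun (_ : Fin g) p => chi (p.1 * p.2))]
  have h2 : ∑ p : ZMod 2 × ZMod 2, chi (p.1 * p.2) = 2 := by decide
  rw [Finset.prod_congr rfl fun _ _ => h2, Finset.prod_const, Finset.card_univ, Fintype.card_fin]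

lemma sum_chi_eq_zero {M : Type*} [AddCommGroup M] [Fintype M] (φ : M → ZMod 2)
    (hadd : ∀ x y, φ (x + y) = φ x + φ y) (x₀ : M) (hx₀ : φ x₀ ≠ 0) :
    ∑ x : M, chi (φ x) = 0 := by
  have h1 : φ x₀ = 1 := by rcases z2_cases (φ x₀) with h | h; exact absurd h hx₀; exact h
  have h2 : ∑ x : M, chi (φ (x + x₀)) = ∑ x : M, chi (φ x) :=
    Fintype.sum_equiv (Equiv.addRight x₀) _ _ fun x => rfl
  have h3 : ∀ x : M, chi (φ (x + x₀)) = -chi (φ x) := by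
    intro x
    rw [hadd, h1, chi_add, chi_one]
    ring
  rw [Finset.sum_congr rfl fun x _ => h3 x, Finset.sum_neg_distrib] at h2
  linarith
lemma tchar_add_self (v : TChar g) : v + v = 0 := by
  have h : (2 : ZMod 2) • v = v + v := two_smul (ZMod 2) v
  rw [show (2 : ZMod 2) = 0 from rfl, zero_smul] at h
  exact h.symm

lemma tchar_neg (v : TChar g) : -v = v :=
  neg_eq_of_add_eq_zero_left (tchar_add_self v)

lemma exists_rep (G : Submodule (ZMod 2) (TChar g)) (hiso : IsIsotropic G) :
    ∃ a₀ : TChar g, ∀ x ∈ G, symplecticPairing a₀ x = Q x := by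
  have hsmul : ∀ (c : ZMod 2) (x : ↥G), Q ((c • x : ↥G) : TChar g) = c * Q (x : TChar g) := by
    intro c x
    rcases z2_cases c with h | h <;> subst h
    · rw [zero_smul, zero_mul, ZeroMemClass.coe_zero, Q_zero]
    · rw [one_smul, one_mul]
  let ℓ : ↥G →ₗ[ZMod 2] ZMod 2 :=
    { toFun := fun x => Q (x : TChar g)
      map_add' := by
        intro x y
        simp only [Submodule.coe_add]
        rw [Q_add, hiso _ x.2 _ y.2, add_zero]
      map_smul' := fun c x => hsmul c x }
  obtain ⟨L, hL⟩ := LinearMap.exists_extend ℓ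
  refine ⟨((B g).toDual B_nondeg).symm L, fun x hx => ?_⟩
  have h1 : B g (((B g).toDual B_nondeg).symm L) x = L x :=
    LinearMap.BilinForm.apply_toDual_symm_apply L x
  have h2 : L x = ℓ ⟨x, hx⟩ := DFunLike.congr_fun hL ⟨x, hx⟩
  rw [← B_apply, h1, h2]
  rfl

lemma coset_even (G : Submodule (ZMod 2) (TChar g)) (hiso : IsIsotropic G)
    (hmax : ∀ G' : Submodule (ZMod 2) (TChar g), IsIsotropic G' → G ≤ G' → G' = G) :
    ∃ w₀ : TChar g, (∀ x ∈ G, symplecticPairing w₀ x = Q x) ∧ Q w₀ = 0 := by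
  classical
  obtain ⟨a₀, ha₀⟩ := exists_rep G hiso
  obtain ⟨W, hW⟩ := Submodule.exists_isCompl G
  obtain ⟨⟨y, w₀'⟩, hsum⟩ := (Submodule.prodEquivOfIsCompl G W hW).surjective a₀
  rw [Submodule.coe_prodEquivOfIsCompl'] at hsum
  set w₀ : TChar g := (w₀' : TChar g) with hw₀def
  have hw₀ : ∀ x ∈ G, symplecticPairing w₀ x = Q x := by
    intro x hx
    have h := ha₀ x hx
    rw [← hsum, sp_add_left, hiso _ y.2 _ hx, zero_add] at h
    exact h
  refine ⟨w₀, hw₀, ?_⟩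
  haveI : Fintype ↥G := Fintype.ofFinite _
  haveI : Fintype ↥W := Fintype.ofFinite _
  -- the big character sum
  have key : ∑ v : TChar g, chi (Q v) = chi (Q w₀) * (Fintype.card ↥G : ℤ) := by
    rw [← Equiv.sum_comp (Submodule.prodEquivOfIsCompl G W hW).toEquiv (fun v => chi (Q v))]
    have hstep : ∀ p : ↥G × ↥W,
        chi (Q ((Submodule.prodEquivOfIsCompl G W hW).toEquiv p)) =
        chi (Q ((p.1 : TChar g) + (p.2 : TChar g))) := by
      intro p
      have : ((Submodule.prodEquivOfIsCompl G W hW).toEquiv p : TChar g) =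
          (p.1 : TChar g) + (p.2 : TChar g) := Submodule.coe_prodEquivOfIsCompl' G W hW p
      rw [this]
    rw [Finset.sum_congr rfl fun p _ => hstep p, Fintype.sum_prod_type, Finset.sum_comm]
    -- inner sums
    have inner : ∀ w : ↥W, ∑ x : ↥G, chi (Q ((x : TChar g) + (w : TChar g))) =
        chi (Q (w : TChar g)) *
          (if ∀ x ∈ G, symplecticPairing (w : TChar g) x = Q x
            then (Fintype.card ↥G : ℤ) else 0) := by
      intro w
      have hterm : ∀ x : ↥G, chi (Q ((x : TChar g) + (w : TChar g))) =
          chi (Q (w : TChar g)) *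
            chi (Q (x : TChar g) + symplecticPairing (x : TChar g) (w : TChar g)) := by
        intro x
        rw [Q_add, show Q (x : TChar g) + Q (w : TChar g) +
          symplecticPairing (x : TChar g) (w : TChar g) = Q (w : TChar g) +
          (Q (x : TChar g) + symplecticPairing (x : TChar g) (w : TChar g)) by ring, chi_add]
      rw [Finset.sum_congr rfl fun x _ => hterm x, ← Finset.mul_sum]
      congr 1
      by_cases hcond : ∀ x ∈ G, symplecticPairing (w : TChar g) x = Q x
      · rw [if_pos hcond]
        have hzero : ∀ x : ↥G,
            Q (x : TChar g) + symplecticPairing (x : TChar g) (w : TChar g) = 0 := by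
          intro x
          rw [sp_comm, hcond _ x.2, z2_add_self]
        rw [Finset.sum_congr rfl fun x _ => by rw [hzero x, chi_zero]]
        simp [Finset.card_univ]
      · rw [if_neg hcond]
        push_neg at hcond
        obtain ⟨x₀, hx₀G, hx₀⟩ := hcond
        refine sum_chi_eq_zero
          (fun x : ↥G => Q (x : TChar g) + symplecticPairing (x : TChar g) (w : TChar g))
          ?_ ⟨x₀, hx₀G⟩ ?_
        · intro x y
          simp only [Submodule.coe_add]
          rw [Q_add, sp_add_left, hiso _ x.2 _ y.2]
          ring
        · show Q x₀ + symplecticPairing x₀ (w : TChar g) ≠ 0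
          rw [Ne, z2_add_eq_zero, sp_comm]
          exact fun h => hx₀ h.symm
    rw [Finset.sum_congr rfl fun w _ => inner w]
    -- only w₀' contributes
    rw [Finset.sum_eq_single w₀' ?_ (by simp)]
    · rw [if_pos hw₀]
    · intro b _ hb
      rw [if_neg, mul_zero]
      intro hcond
      apply hb
      have hv : ∀ x ∈ G, symplecticPairing ((b : TChar g) - w₀) x = 0 := by
        intro x hx
        rw [sub_eq_add_neg, tchar_neg, sp_add_left, hcond x hx, hw₀ x hx, z2_add_self]
      have hmem : (b : TChar g) - w₀ ∈ G := mem_of_orth ⟨hiso, hmax⟩ _ hv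
      have hmemW : (b : TChar g) - w₀ ∈ W := W.sub_mem b.2 w₀'.2
      have : (b : TChar g) - w₀ = 0 := by
        have := hW.disjoint
        rw [Submodule.disjoint_def] at this
        exact this _ hmem hmemW
      exact Subtype.ext (by rw [sub_eq_zero] at this; exact this)
  rw [total_sum] at key
  have hcard : 1 ≤ (Fintype.card ↥G : ℤ) := by exact_mod_cast Fintype.card_pos
  have hpow : (0 : ℤ) < 2 ^ g := by positivity
  rcases z2_cases (Q w₀) with h | h
  · exact h
  · exfalso
    rw [h, chi_one] at key
    linarith
end GopelAux

open GopelAux in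
/-- Every Göpel group has exactly one coset `M = a + G` consisting entirely of
even theta characteristics. -/
theorem gopel_unique_even_coset (g : ℕ) (hg : 1 ≤ g) (G : Submodule (ZMod 2) (TChar g))
    (hG : IsGopel G) :
    ∃! M : Set (TChar g),
      (∃ a : TChar g, M = (fun x => a + x) '' (G : Set (TChar g))) ∧ ∀ m ∈ M, IsEvenChar m := by
  obtain ⟨hiso, hmax⟩ := hG
  obtain ⟨w₀, hw₀, hQw₀⟩ := coset_even G hiso hmax
  refine ⟨(fun x => w₀ + x) '' (G : Set (TChar g)), ⟨⟨w₀, rfl⟩, ?_⟩, ?_⟩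
  · rintro m ⟨x, hx, rfl⟩
    show Q (w₀ + x) = 0
    rw [Q_add, hQw₀, hw₀ x hx, zero_add, z2_add_self]
  · rintro M ⟨⟨a, rfl⟩, hM⟩
    have haQ : Q a = 0 := by
      have h0 : IsEvenChar (a + 0) := hM _ ⟨0, G.zero_mem, rfl⟩
      rw [add_zero] at h0
      exact h0
    have ha : ∀ x ∈ G, symplecticPairing a x = Q x := by
      intro x hx
      have h0 : Q (a + x) = 0 := hM _ ⟨x, hx, rfl⟩
      rw [Q_add, haQ, zero_add] at h0
      exact (z2_add_eq_zero.mp h0).symm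
    have hd : a - w₀ ∈ G := by
      refine mem_of_orth ⟨hiso, hmax⟩ _ fun x hx => ?_
      rw [sub_eq_add_neg, tchar_neg, sp_add_left, ha x hx, hw₀ x hx, z2_add_self]
    ext m
    simp only [Set.mem_image, SetLike.mem_coe]
    constructor
    · rintro ⟨x, hx, rfl⟩
      exact ⟨(a - w₀) + x, G.add_mem hd hx, by abel⟩
    · rintro ⟨x, hx, rfl⟩
      exact ⟨(w₀ - a) + x, G.add_mem (by rw [show w₀ - a = -(a - w₀) by abel]; exact G.neg_mem hd) hx, by abel⟩
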